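/- Let n ≥ 16 and let m be a positive integer with m ≤ n^{4/3}. Then m has at most one divisor d satisfying n - √n < d ≤ n. -/
import Mathlib

lemma cube_aux (x : ℝ) (hx : 3 / 2 ≤ x) : (0 : ℝ) ≤ x ^ 3 - x ^ 2 - 1 := by
  nlinarith [sq_nonneg (x - 3 / 2), sq_nonneg x]

set_option maxHeartbeats 1000000 in
lemma key_aux (n m : ℕ) (hn : 16 ≤ n) (hm : 0 < m)
    (hmn : (m : ℝ) ≤ (n : ℝ) ^ ((4 : ℝ) / 3))
    (d₁ d₂ : ℕ) (h1 : d₁ ∣ m) (h2 : d₂ ∣ m)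
    (hl1 : (n : ℝ) - Real.sqrt n < d₁) (hu2 : d₂ ≤ n)
    (hlt : d₁ < d₂) : False := by
  set x : ℝ := (n : ℝ) ^ ((1 : ℝ) / 6) with hxdef
  have hn0 : (0 : ℝ) ≤ n := Nat.cast_nonneg n
  have hx6 : x ^ 6 = (n : ℝ) := by
    rw [hxdef, ← Real.rpow_natCast ((n : ℝ) ^ ((1 : ℝ) / 6)) 6, ← Real.rpow_mul hn0]
    norm_num
  have hx8 : x ^ 8 = (n : ℝ) ^ ((4 : ℝ) / 3) := by
    rw [hxdef, ← Real.rpow_natCast ((n : ℝ) ^ ((1 : ℝ) / 6)) 8, ← Real.rpow_mul hn0]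
    norm_num
  have hx3 : x ^ 3 = Real.sqrt n := by
    rw [Real.sqrt_eq_rpow, hxdef, ← Real.rpow_natCast ((n : ℝ) ^ ((1 : ℝ) / 6)) 3,
      ← Real.rpow_mul hn0]
    norm_num
  have hx : (3 : ℝ) / 2 ≤ x := by
    have h16 : ((3 : ℝ) / 2) ^ 6 ≤ x ^ 6 := by
      rw [hx6]
      have : (16 : ℝ) ≤ n := by exact_mod_cast hn
      nlinarith
    exact le_of_pow_le_pow_left₀ (by norm_num) (Real.rpow_nonneg hn0 _) h16
  have hl1' : x ^ 6 - x ^ 3 < (d₁ : ℝ) := by rw [hx6, hx3]; exact hl1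
  have hu2' : (d₂ : ℝ) ≤ x ^ 6 := by rw [hx6]; exact_mod_cast hu2
  have hx1 : (1 : ℝ) ≤ x := by linarith
  have hx36 : x ^ 3 ≤ x ^ 6 := pow_le_pow_right₀ hx1 (by norm_num)
  have hx68 : x ^ 6 ≤ x ^ 8 := pow_le_pow_right₀ hx1 (by norm_num)
  have hd1pos : 0 < d₁ := by
    by_contra h
    push_neg at h
    interval_cases d₁
    · simp at hl1'
      linarith
  set g := Nat.gcd d₁ d₂ with hgdef
  set L := Nat.lcm d₁ d₂ with hLdef
  have hg0 : 0 < g := Nat.gcd_pos_of_pos_left _ hd1pos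
  have hgd : g ∣ d₂ - d₁ := Nat.dvd_sub (Nat.gcd_dvd_right _ _) (Nat.gcd_dvd_left _ _)
  have hgle : g ≤ d₂ - d₁ := Nat.le_of_dvd (by omega) hgd
  have hmul : d₁ * d₂ = g * L := (Nat.gcd_mul_lcm d₁ d₂).symm
  have hLm : L ∣ m := Nat.lcm_dvd h1 h2
  have hLle : L ≤ m := Nat.le_of_dvd hm hLm
  -- real versions
  have hG1 : (1 : ℝ) ≤ (g : ℝ) := by exact_mod_cast hg0
  have hGle : (g : ℝ) ≤ (d₂ : ℝ) - (d₁ : ℝ) := by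
    have : (g : ℝ) ≤ ((d₂ - d₁ : ℕ) : ℝ) := by exact_mod_cast hgle
    rwa [Nat.cast_sub hlt.le] at this
  have hL : (L : ℝ) ≤ x ^ 8 := by
    rw [hx8]
    exact le_trans (by exact_mod_cast hLle) hmn
  have hprod : (d₁ : ℝ) * (d₂ : ℝ) = (g : ℝ) * (L : ℝ) := by exact_mod_cast hmul
  set a := (d₁ : ℝ)
  set b := (d₂ : ℝ)
  have ha0 : (0 : ℝ) < a := by exact Nat.cast_pos.mpr hd1pos
  have hba : a < b := by exact Nat.cast_lt.mpr hlt
  have hG3 : (g : ℝ) < x ^ 3 := by nlinarith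
  have hab : a + (g : ℝ) ≤ b := by linarith
  have hstep : a ^ 2 + a * (g : ℝ) ≤ (g : ℝ) * x ^ 8 := by
    have h1' : a * (a + (g : ℝ)) ≤ a * b := by
      exact mul_le_mul_of_nonneg_left hab ha0.le
    have h2' : (g : ℝ) * (L : ℝ) ≤ (g : ℝ) * x ^ 8 :=
      mul_le_mul_of_nonneg_left hL (by linarith)
    nlinarith
  have hx8a : 0 < x ^ 8 - a := by linarith
  have hxpos : (0 : ℝ) < x := by linarith
  have hkey : a ^ 2 < x ^ 3 * (x ^ 8 - a) := by
    have h3 : (g : ℝ) * (x ^ 8 - a) < x ^ 3 * (x ^ 8 - a) :=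
      mul_lt_mul_of_pos_right hG3 hx8a
    have e : (g : ℝ) * (x ^ 8 - a) = (g : ℝ) * x ^ 8 - a * (g : ℝ) := by ring
    have e2 : x ^ 3 * (x ^ 8 - a) = x ^ 3 * x ^ 8 - x ^ 3 * a := by ring
    linarith
  -- from hl1' and hkey derive the contradiction
  have hnn : (0 : ℝ) ≤ x ^ 6 - x ^ 3 := by linarith
  have hsq : (x ^ 6 - x ^ 3) ^ 2 < a ^ 2 := by
    have := pow_lt_pow_left₀ hl1' hnn (n := 2) (by norm_num)
    exact this
  have hma : x ^ 3 * (x ^ 6 - x ^ 3) < x ^ 3 * a :=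
    mul_lt_mul_of_pos_left hl1' (pow_pos hxpos 3)
  have hfin : (x ^ 6 - x ^ 3) ^ 2 < x ^ 3 * x ^ 8 - x ^ 3 * (x ^ 6 - x ^ 3) := by
    have e2 : x ^ 3 * (x ^ 8 - a) = x ^ 3 * x ^ 8 - x ^ 3 * a := by ring
    linarith
  have hc : (0 : ℝ) ≤ x ^ 3 - x ^ 2 - 1 := cube_aux x hx
  have h9 : (0 : ℝ) ≤ x ^ 9 * (x ^ 3 - x ^ 2 - 1) :=
    mul_nonneg (pow_pos hxpos 9).le hc
  linarith [hfin, h9]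

theorem stmt_4 (n m : ℕ) (hn : 16 ≤ n) (hm : 0 < m)
    (hmn : (m : ℝ) ≤ (n : ℝ) ^ ((4 : ℝ) / 3)) :
    ∀ d₁ d₂ : ℕ, d₁ ∣ m → d₂ ∣ m →
      (n : ℝ) - Real.sqrt n < d₁ → d₁ ≤ n →
      (n : ℝ) - Real.sqrt n < d₂ → d₂ ≤ n → d₁ = d₂ := by
  intro d₁ d₂ h1 h2 hl1 hu1 hl2 hu2
  by_contra hne
  rcases Nat.lt_or_ge d₁ d₂ with h | h
  · exact key_aux n m hn hm hmn d₁ d₂ h1 h2 hl1 hu2 h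
  · exact key_aux n m hn hm hmn d₂ d₁ h2 h1 hl2 hu1 (lt_of_le_of_ne h (Ne.symm hne))
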